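/- Let P be the family of facets of a polytope indexed by intervals of [n+1] (proper connected induced subgraphs of the path graph), with two facets F_I, F_J intersecting iff the intervals I, J satisfy: I ∩ J ∈ {∅, I, J}, and if I ∩ J = ∅ then I ∪ J is not an interval. Then for any set S of intervals with |S| > i_max, the 'union of facets' graph on S (vertices S, edges between intersecting facets) has at most 2 connected components. -/

import Mathlib

/-- An interval `{a, a+1, ..., b}` with `1 ≤ a ≤ b ≤ n+1`, viewed inside `[n+1]`. -/
def IsInterval (n : ℕ) (S : Finset ℕ) : Prop :=
  ∃ a b : ℕ, 1 ≤ a ∧ a ≤ b ∧ b ≤ n + 1 ∧ S = Finset.Icc a b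

/-- `γ̃` either intersects `γ` nontrivially, or is disjoint from `γ` with
`γ ∪ γ̃` an interval (connected union in the path graph). -/
def iRel (n : ℕ) (γ J : Finset ℕ) : Prop :=
  (γ ∩ J ≠ ∅ ∧ γ ∩ J ≠ γ ∧ γ ∩ J ≠ J) ∨ (γ ∩ J = ∅ ∧ IsInterval n (γ ∪ J))

/-- `i(γ)`: the number of intervals `γ̃` related to `γ` as above. -/
noncomputable def iCount (n : ℕ) (γ : Finset ℕ) : ℕ :=
  Nat.card {J : Finset ℕ // IsInterval n J ∧ iRel n γ J}

/-- `i_max`: the maximum of `i(γ)` over all intervals `γ`. -/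
noncomputable def iMax (n : ℕ) : ℕ :=
  sSup {k | ∃ γ : Finset ℕ, IsInterval n γ ∧ iCount n γ = k}

/-- Two facets of the associahedron indexed by intervals `I, J` intersect iff
`I ∩ J ∈ {∅, I, J}` and it is not the case that `I ∩ J = ∅` with `I ∪ J` an interval. -/
def facetMeets (n : ℕ) (I J : Finset ℕ) : Prop :=
  (I ∩ J = ∅ ∨ I ∩ J = I ∨ I ∩ J = J) ∧ ¬(I ∩ J = ∅ ∧ IsInterval n (I ∪ J))

attribute [local instance] Classical.propDecidable

namespace Stmt11Aux

noncomputable def lo (I : Finset ℕ) : ℕ := sInf (I : Set ℕ)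
noncomputable def hi (I : Finset ℕ) : ℕ := I.sup id

lemma lo_Icc {a b : ℕ} (h : a ≤ b) : lo (Finset.Icc a b) = a := by
  apply le_antisymm
  · exact Nat.sInf_le (by simp [Finset.coe_Icc, Set.mem_Icc, h])
  · exact le_csInf ⟨a, by simp [Finset.coe_Icc, Set.mem_Icc, h]⟩
      (fun x hx => by simp [Finset.coe_Icc, Set.mem_Icc] at hx; omega)

lemma hi_Icc {a b : ℕ} (h : a ≤ b) : hi (Finset.Icc a b) = b := by
  apply le_antisymm
  · exact Finset.sup_le (fun x hx => by
      simp only [Finset.mem_Icc] at hx; simp only [id_eq]; omega)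
  · have : b ∈ Finset.Icc a b := by simp [Finset.mem_Icc, h]
    exact Finset.le_sup (f := id) this

def Cross (p q x y : ℕ) : Prop := (p < x ∧ x < q ∧ q < y) ∨ (x < p ∧ p < y ∧ y < q)

lemma cross_symm {p q x y : ℕ} (h : Cross p q x y) : Cross x y p q := by
  unfold Cross at *; omega

lemma cross_char {p q x y : ℕ} (hxy : x < y) :
    Cross p q x y ↔ (x ≠ p ∧ x ≠ q ∧ y ≠ p ∧ y ≠ q ∧ ((p < x ∧ x < q) ↔ ¬(p < y ∧ y < q))) := by
  unfold Cross; constructor <;> (intro h; omega)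

lemma iRel_iff {n a b c d : ℕ} (ha : 1 ≤ a) (hab : a ≤ b) (_hb : b ≤ n+1)
    (hc : 1 ≤ c) (hcd : c ≤ d) (hd : d ≤ n+1) :
    iRel n (Finset.Icc a b) (Finset.Icc c d) ↔ Cross (a-1) (b+1) (c-1) (d+1) := by
  have hint : Finset.Icc a b ∩ Finset.Icc c d = Finset.Icc (max a c) (min b d) := by
    ext x; simp only [Finset.mem_inter, Finset.mem_Icc]; omega
  have hempty : (Finset.Icc a b ∩ Finset.Icc c d = ∅) ↔ (b < c ∨ d < a) := by
    rw [hint, Finset.Icc_eq_empty_iff]; omega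
  have heqI : (Finset.Icc a b ∩ Finset.Icc c d = Finset.Icc a b) ↔ (c ≤ a ∧ b ≤ d) := by
    rw [Finset.inter_eq_left, Finset.Icc_subset_Icc_iff hab]
  have heqJ : (Finset.Icc a b ∩ Finset.Icc c d = Finset.Icc c d) ↔ (a ≤ c ∧ d ≤ b) := by
    rw [Finset.inter_eq_right, Finset.Icc_subset_Icc_iff hcd]
  have hUI : (Finset.Icc a b ∩ Finset.Icc c d = ∅ ∧ IsInterval n (Finset.Icc a b ∪ Finset.Icc c d))
      ↔ ((b+1 = c) ∨ (d+1 = a)) := by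
    constructor
    · rintro ⟨hdisj, p, q, hp1, hpq, hq, hU⟩
      rw [hempty] at hdisj
      have hmem : ∀ x, ((a ≤ x ∧ x ≤ b) ∨ (c ≤ x ∧ x ≤ d)) ↔ (p ≤ x ∧ x ≤ q) := by
        intro x
        rw [← Finset.mem_Icc (a := a), ← Finset.mem_Icc (a := c), ← Finset.mem_Icc (a := p),
          ← Finset.mem_union, hU]
      by_contra hcon
      push_neg at hcon
      rcases hdisj with h1 | h2
      · have hb' := (hmem b).1 (Or.inl ⟨hab, le_refl b⟩)
        have hc' := (hmem c).1 (Or.inr ⟨le_refl c, hcd⟩)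
        have hmid := (hmem (b+1)).2 (by omega)
        omega
      · have ha' := (hmem a).1 (Or.inl ⟨le_refl a, hab⟩)
        have hd' := (hmem d).1 (Or.inr ⟨hcd, le_refl d⟩)
        have hmid := (hmem (d+1)).2 (by omega)
        omega
    · rintro (h | h)
      · refine ⟨by rw [hempty]; omega, a, d, by omega, by omega, by omega, ?_⟩
        ext x; simp only [Finset.mem_union, Finset.mem_Icc]; omega
      · refine ⟨by rw [hempty]; omega, c, b, by omega, by omega, by omega, ?_⟩
        ext x; simp only [Finset.mem_union, Finset.mem_Icc]; omega
  unfold iRel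
  constructor
  · rintro (⟨h1, h2, h3⟩ | h)
    · rw [Ne, hempty] at h1
      rw [Ne, heqI] at h2
      rw [Ne, heqJ] at h3
      unfold Cross; omega
    · rw [hUI] at h; unfold Cross; omega
  · intro hcr
    by_cases hdisj : Finset.Icc a b ∩ Finset.Icc c d = ∅
    · right
      refine hUI.mpr ?_
      rw [hempty] at hdisj
      unfold Cross at hcr; omega
    · left
      refine ⟨hdisj, ?_, ?_⟩
      · intro h; rw [heqI] at h; unfold Cross at hcr; omega
      · intro h; rw [heqJ] at h; unfold Cross at hcr; omega

lemma iRel_iff_cross {n : ℕ} {I J : Finset ℕ} (hI : IsInterval n I) (hJ : IsInterval n J) :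
    iRel n I J ↔ Cross (lo I - 1) (hi I + 1) (lo J - 1) (hi J + 1) := by
  obtain ⟨a, b, ha, hab, hb, rfl⟩ := hI
  obtain ⟨c, d, hc, hcd, hd, rfl⟩ := hJ
  rw [lo_Icc hab, hi_Icc hab, lo_Icc hcd, hi_Icc hcd]
  exact iRel_iff ha hab hb hc hcd hd

lemma facetMeets_iff_not_iRel {n : ℕ} {I J : Finset ℕ} :
    facetMeets n I J ↔ ¬ iRel n I J := by
  unfold facetMeets iRel; tauto

lemma Icc_inj {a b c d : ℕ} (h : a ≤ b) (h2 : Finset.Icc a b = Finset.Icc c d) :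
    a = c ∧ b = d := by
  have H : ∀ x, (a ≤ x ∧ x ≤ b) ↔ (c ≤ x ∧ x ≤ d) := fun x => by
    rw [← Finset.mem_Icc, ← Finset.mem_Icc, h2]
  have h1 := H a; have h2' := H b; have h3 := H c; have h4 := H d; omega

lemma interval_struct {n : ℕ} {I : Finset ℕ} (h : IsInterval n I) :
    1 ≤ lo I ∧ lo I ≤ hi I ∧ hi I ≤ n + 1 ∧ I = Finset.Icc (lo I) (hi I) := by
  obtain ⟨a, b, ha, hab, hb, rfl⟩ := h
  rw [lo_Icc hab, hi_Icc hab]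
  exact ⟨ha, hab, hb, rfl⟩

lemma interval_mem_powerset {n : ℕ} {I : Finset ℕ} (h : IsInterval n I) :
    I ∈ (Finset.Icc 1 (n+1)).powerset := by
  obtain ⟨a, b, ha, hab, hb, rfl⟩ := h
  rw [Finset.mem_powerset]
  exact Finset.Icc_subset_Icc (by omega) (by omega)

lemma iCount_set_finite (n : ℕ) (γ : Finset ℕ) :
    {J : Finset ℕ | IsInterval n J ∧ iRel n γ J}.Finite :=
  Set.Finite.subset (Finset.Icc 1 (n+1)).powerset.finite_toSet
    (fun J hJ => interval_mem_powerset hJ.1)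

lemma le_iCount {n : ℕ} {γ : Finset ℕ} (T : Finset (Finset ℕ))
    (hT : ∀ J ∈ T, IsInterval n J ∧ iRel n γ J) : T.card ≤ iCount n γ := by
  unfold iCount
  have hc : Nat.card { J // IsInterval n J ∧ iRel n γ J }
      = {J : Finset ℕ | IsInterval n J ∧ iRel n γ J}.ncard :=
    Nat.card_coe_set_eq {J : Finset ℕ | IsInterval n J ∧ iRel n γ J}
  rw [hc]
  calc T.card = (↑T : Set (Finset ℕ)).ncard := (Set.ncard_coe_finset T).symm
    _ ≤ _ := Set.ncard_le_ncard (fun J hJ => hT J (by simpa using hJ)) (iCount_set_finite n γ)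

lemma iCount_le_bound (n : ℕ) (γ : Finset ℕ) :
    iCount n γ ≤ (Finset.Icc 1 (n+1)).powerset.card := by
  unfold iCount
  have hc : Nat.card { J // IsInterval n J ∧ iRel n γ J }
      = {J : Finset ℕ | IsInterval n J ∧ iRel n γ J}.ncard :=
    Nat.card_coe_set_eq {J : Finset ℕ | IsInterval n J ∧ iRel n γ J}
  rw [hc]
  calc ({J : Finset ℕ | IsInterval n J ∧ iRel n γ J}).ncard
      ≤ (↑(Finset.Icc 1 (n+1)).powerset : Set (Finset ℕ)).ncard :=
        Set.ncard_le_ncard (fun J hJ => interval_mem_powerset hJ.1)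
          (Finset.Icc 1 (n+1)).powerset.finite_toSet
    _ = _ := Set.ncard_coe_finset _

lemma iCount_le_iMax {n : ℕ} {γ : Finset ℕ} (h : IsInterval n γ) :
    iCount n γ ≤ iMax n :=
  le_csSup ⟨(Finset.Icc 1 (n+1)).powerset.card,
    fun k ⟨γ', _, hk⟩ => hk ▸ iCount_le_bound n γ'⟩ ⟨γ, h, rfl⟩

lemma iMax_lb {n u : ℕ} (hu1 : 1 ≤ u) (hun : u ≤ n) : u * (n + 1 - u) ≤ iMax n := by
  have hγ : IsInterval n (Finset.Icc 1 u) := ⟨1, u, le_refl 1, hu1, by omega, rfl⟩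
  set T := ((Finset.Ioo 0 (u+1)) ×ˢ (Finset.Ioo (u+1) (n+3))).image
    (fun p : ℕ × ℕ => Finset.Icc (p.1+1) (p.2-1)) with hTdef
  have hmemT : ∀ J ∈ T, IsInterval n J ∧ iRel n (Finset.Icc 1 u) J := by
    intro J hJ
    rw [hTdef, Finset.mem_image] at hJ
    obtain ⟨p, hp, rfl⟩ := hJ
    rw [Finset.mem_product, Finset.mem_Ioo, Finset.mem_Ioo] at hp
    have hint : IsInterval n (Finset.Icc (p.1+1) (p.2-1)) :=
      ⟨p.1+1, p.2-1, by omega, by omega, by omega, rfl⟩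
    refine ⟨hint, ?_⟩
    rw [iRel_iff (le_refl 1) hu1 (by omega) (by omega) (by omega) (by omega)]
    unfold Cross; omega
  have hcardT : T.card = u * (n + 1 - u) := by
    rw [hTdef, Finset.card_image_of_injOn, Finset.card_product, Nat.card_Ioo, Nat.card_Ioo]
    · congr 1 <;> omega
    · intro p hp q hq he
      simp only [Finset.coe_product, Set.mem_prod, Finset.mem_coe, Finset.mem_Ioo] at hp hq
      have h1 : p.1 + 1 ≤ p.2 - 1 := by omega
      have := Icc_inj h1 he
      ext
      · omega
      · omega
  calc u * (n+1-u) = T.card := hcardT.symm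
    _ ≤ iCount n (Finset.Icc 1 u) := le_iCount T hmemT
    _ ≤ iMax n := iCount_le_iMax hγ

noncomputable def dl (I : Finset ℕ) : ℕ := lo I - 1
noncomputable def dr (I : Finset ℕ) : ℕ := hi I + 1

lemma interval_eq_dia {n : ℕ} {I : Finset ℕ} (h : IsInterval n I) :
    I = Finset.Icc (dl I + 1) (dr I - 1) ∧ dl I + 2 ≤ dr I ∧ dr I ≤ n + 2 := by
  obtain ⟨h1, h2, h3, h4⟩ := interval_struct h
  unfold dl dr
  refine ⟨?_, by omega, by omega⟩
  have e1 : lo I - 1 + 1 = lo I := by omega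
  have e2 : hi I + 1 - 1 = hi I := by omega
  rw [e1, e2]; exact h4

lemma dia_Icc {s t : ℕ} (h1 : 1 ≤ s + 1) (h2 : s + 1 ≤ t - 1) :
    dl (Finset.Icc (s+1) (t-1)) = s ∧ dr (Finset.Icc (s+1) (t-1)) = t - 1 + 1 := by
  unfold dl dr
  rw [lo_Icc h2, hi_Icc h2]
  omega

lemma two_mul_le_sq_add_sq (a b : ℕ) : 2 * (a * b) ≤ a * a + b * b := by
  rcases le_total a b with h | h
  · obtain ⟨t, rfl⟩ := Nat.le.dest h
    nlinarith
  · obtain ⟨t, rfl⟩ := Nat.le.dest h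
    nlinarith

lemma key_prod0 {a b c d : ℕ} (ha : 1 ≤ a) (hb : 1 ≤ b) (hc : 1 ≤ c) (hd : 1 ≤ d) :
    a * b + c * d ≤ (a + c - 1) * (b + d - 1) + 1 := by
  obtain ⟨a', rfl⟩ : ∃ a', a = a' + 1 := ⟨a - 1, by omega⟩
  obtain ⟨b', rfl⟩ : ∃ b', b = b' + 1 := ⟨b - 1, by omega⟩
  obtain ⟨c', rfl⟩ : ∃ c', c = c' + 1 := ⟨c - 1, by omega⟩
  obtain ⟨d', rfl⟩ : ∃ d', d = d' + 1 := ⟨d - 1, by omega⟩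
  have h1 : a' + 1 + (c' + 1) - 1 = a' + c' + 1 := by omega
  have h2 : b' + 1 + (d' + 1) - 1 = b' + d' + 1 := by omega
  rw [h1, h2]
  nlinarith

lemma key_prod {a b c d h k Q : ℕ} (ha : 1 ≤ a) (hb : 1 ≤ b) (hc : 1 ≤ c) (hd : 1 ≤ d)
    (hk : 1 ≤ k) (hQ : Q ≤ h * k) :
    a * b + c * d + Q ≤ (a + c - 1 + h) * (b + d - 1 + k) := by
  obtain ⟨a', rfl⟩ : ∃ a', a = a' + 1 := ⟨a - 1, by omega⟩
  obtain ⟨b', rfl⟩ : ∃ b', b = b' + 1 := ⟨b - 1, by omega⟩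
  obtain ⟨c', rfl⟩ : ∃ c', c = c' + 1 := ⟨c - 1, by omega⟩
  obtain ⟨d', rfl⟩ : ∃ d', d = d' + 1 := ⟨d - 1, by omega⟩
  have h1 : a' + 1 + (c' + 1) - 1 + h = a' + c' + 1 + h := by omega
  have h2 : b' + 1 + (d' + 1) - 1 + k = b' + d' + 1 + k := by omega
  rw [h1, h2]
  nlinarith

lemma arith1 {a b c d N : ℕ} (ha : 1 ≤ a) (hb : 1 ≤ b) (hc : 1 ≤ c) (hd : 1 ≤ d)
    (hs : a + b + c + d ≤ N) :
    ∃ u, 1 ≤ u ∧ u + 3 ≤ N ∧ a * b + c * d ≤ u * (N - 2 - u) + 1 := by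
  refine ⟨a + c - 1, by omega, by omega, ?_⟩
  calc a * b + c * d ≤ (a + c - 1) * (b + d - 1) + 1 := key_prod0 ha hb hc hd
    _ ≤ (a + c - 1) * (N - 2 - (a + c - 1)) + 1 := by
        have : b + d - 1 ≤ N - 2 - (a + c - 1) := by omega
        exact Nat.add_le_add_right (Nat.mul_le_mul_left _ this) 1

lemma arith2 {a b c d r Q N : ℕ} (ha : 1 ≤ a) (hb : 1 ≤ b) (hc : 1 ≤ c) (hd : 1 ≤ d)
    (hQ : 1 ≤ Q) (hr : 4 * Q ≤ r * r) (hs : a + b + c + d + r ≤ N) :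
    ∃ u, 1 ≤ u ∧ u + 3 ≤ N ∧ a * b + c * d + Q ≤ u * (N - 2 - u) := by
  rcases Nat.even_or_odd r with ⟨m, rfl⟩ | ⟨m, rfl⟩
  · have hmm : (m + m) * (m + m) = 4 * (m * m) := by ring
    have hQm : Q ≤ m * m := by omega
    have hm1 : 1 ≤ m := by nlinarith
    refine ⟨a + c - 1 + m, by omega, by omega, ?_⟩
    calc a * b + c * d + Q ≤ (a + c - 1 + m) * (b + d - 1 + m) :=
          key_prod ha hb hc hd hm1 hQm
      _ ≤ (a + c - 1 + m) * (N - 2 - (a + c - 1 + m)) := by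
          apply Nat.mul_le_mul_left
          omega
  · have hmm : (2 * m + 1) * (2 * m + 1) = 4 * (m * m + m) + 1 := by ring
    have hQm : Q ≤ m * (m + 1) := by
      have : Q ≤ m * m + m := by omega
      nlinarith
    refine ⟨a + c - 1 + m, by omega, by omega, ?_⟩
    calc a * b + c * d + Q ≤ (a + c - 1 + m) * (b + d - 1 + (m + 1)) :=
          key_prod ha hb hc hd (by omega) hQm
      _ ≤ (a + c - 1 + m) * (N - 2 - (a + c - 1 + m)) := by
          apply Nat.mul_le_mul_left
          omega

lemma KXcard {W : Finset (Finset ℕ)} {X Y : Finset ℕ} (hXY : X ∩ Y = ∅)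
    (hval : ∀ J ∈ W, dl J < dr J ∧ ((dl J ∈ X ∧ dr J ∈ Y) ∨ (dl J ∈ Y ∧ dr J ∈ X)))
    (hinj : ∀ J ∈ W, ∀ J' ∈ W, dl J = dl J' → dr J = dr J' → J = J') :
    W.card ≤ X.card * Y.card := by
  rw [← Finset.card_product]
  apply Finset.card_le_card_of_injOn (fun J => if dl J ∈ X then (dl J, dr J) else (dr J, dl J))
  · intro J hJ
    obtain ⟨hlt, hcase⟩ := hval J hJ
    by_cases hX : dl J ∈ X
    · simp only [Finset.mem_coe]
      rw [if_pos hX, Finset.mem_product]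
      rcases hcase with ⟨_, h2⟩ | ⟨h1, _⟩
      · exact ⟨hX, h2⟩
      · exfalso
        have : dl J ∈ X ∩ Y := Finset.mem_inter.mpr ⟨hX, h1⟩
        rw [hXY] at this; exact absurd this (Finset.notMem_empty _)
    · simp only [Finset.mem_coe]
      rw [if_neg hX, Finset.mem_product]
      rcases hcase with ⟨h1, _⟩ | ⟨_, h2⟩
      · exact absurd h1 hX
      · exact ⟨h2, by assumption⟩
  · intro J hJ J' hJ' he
    simp only [Finset.mem_coe] at hJ hJ'
    obtain ⟨hlt, _⟩ := hval J hJ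
    obtain ⟨hlt', _⟩ := hval J' hJ'
    dsimp only at he
    split_ifs at he <;> rw [Prod.ext_iff] at he <;> obtain ⟨he1, he2⟩ := he <;>
      first
        | exact hinj J hJ J' hJ' he1 he2
        | exact hinj J hJ J' hJ' he2 he1
        | omega

noncomputable def patC (C : Finset (Finset ℕ)) (w : ℕ) : Finset (Finset ℕ) :=
  C.filter (fun f => dl f < w ∧ w < dr f)

lemma patC_subset (C : Finset (Finset ℕ)) (w : ℕ) : patC C w ⊆ C := Finset.filter_subset _ _

lemma mem_patC {C : Finset (Finset ℕ)} {w : ℕ} {f : Finset ℕ} :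
    f ∈ patC C w ↔ f ∈ C ∧ (dl f < w ∧ w < dr f) := by
  rw [patC, Finset.mem_filter]

lemma compl_ne {C p : Finset (Finset ℕ)} (hC : C.Nonempty) (hp : p ⊆ C) : p ≠ C \ p := by
  intro h
  obtain ⟨f, hf⟩ := hC
  by_cases hfp : f ∈ p
  · have h2 : f ∈ C \ p := h ▸ hfp
    exact (Finset.mem_sdiff.mp h2).2 hfp
  · have h2 : f ∈ C \ p := Finset.mem_sdiff.mpr ⟨hf, hfp⟩
    rw [← h] at h2
    exact hfp h2

lemma opp_ind (C : Finset (Finset ℕ)) (hC : C.Nonempty) (K : Finset (Finset ℕ))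
    (hK : ∀ J ∈ K, dl J < dr J ∧ patC C (dr J) = C \ patC C (dl J))
    (hinj : ∀ J ∈ K, ∀ J' ∈ K, dl J = dl J' → dr J = dr J' → J = J') :
    ∀ (N : ℕ) (R : Finset ℕ), R.card ≤ N →
      4 * (K.filter (fun J => dl J ∈ R ∧ dr J ∈ R)).card ≤ R.card * R.card := by
  intro N
  induction N with
  | zero =>
    intro R hR
    have hRe : R = ∅ := Finset.card_eq_zero.mp (le_antisymm hR (Nat.zero_le _))
    have : K.filter (fun J => dl J ∈ R ∧ dr J ∈ R) = ∅ := by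
      rw [Finset.filter_eq_empty_iff]
      intro J _ h
      rw [hRe] at h
      exact absurd h.1 (Finset.notMem_empty _)
    rw [this]
    simp
  | succ N ih =>
    intro R hR
    by_cases hne : (K.filter (fun J => dl J ∈ R ∧ dr J ∈ R)).Nonempty
    swap
    · rw [Finset.not_nonempty_iff_eq_empty] at hne
      rw [hne]
      simp
    obtain ⟨J0, hJ0⟩ := hne
    rw [Finset.mem_filter] at hJ0
    obtain ⟨hJ0K, hx, hy⟩ := hJ0
    set p0 := patC C (dl J0) with hp0
    set A := R.filter (fun w => patC C w = p0) with hA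
    set B := R.filter (fun w => patC C w = C \ p0) with hB
    set R' := R \ (A ∪ B) with hR'def
    have hABempty : A ∩ B = ∅ := by
      rw [Finset.eq_empty_iff_forall_notMem]
      intro w hw
      rw [Finset.mem_inter, hA, hB, Finset.mem_filter, Finset.mem_filter] at hw
      exact compl_ne hC (hp0 ▸ patC_subset C (dl J0)) (hw.1.2 ▸ hw.2.2)
    have hxA : dl J0 ∈ A := Finset.mem_filter.mpr ⟨hx, rfl⟩
    have hsplit : ∀ J ∈ K, dl J ∈ R → dr J ∈ R →
        ((dl J ∈ A ∧ dr J ∈ B) ∨ (dl J ∈ B ∧ dr J ∈ A)) ∨ (dl J ∈ R' ∧ dr J ∈ R') := by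
      intro J hJ h1 h2
      obtain ⟨_, hpat⟩ := hK J hJ
      have hflip : patC C (dl J) = C \ patC C (dr J) := by
        rw [hpat, Finset.sdiff_sdiff_eq_self (patC_subset _ _)]
      by_cases hA1 : dl J ∈ A
      · left; left
        refine ⟨hA1, Finset.mem_filter.mpr ⟨h2, ?_⟩⟩
        rw [hpat, (Finset.mem_filter.mp hA1).2]
      by_cases hB1 : dl J ∈ B
      · left; right
        refine ⟨hB1, Finset.mem_filter.mpr ⟨h2, ?_⟩⟩
        rw [hpat, (Finset.mem_filter.mp hB1).2, Finset.sdiff_sdiff_eq_self (patC_subset _ _)]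
      right
      have hdl : dl J ∈ R' := Finset.mem_sdiff.mpr ⟨h1, by
        rw [Finset.mem_union]; tauto⟩
      refine ⟨hdl, Finset.mem_sdiff.mpr ⟨h2, ?_⟩⟩
      intro hmem
      rw [Finset.mem_union] at hmem
      rcases hmem with hA2 | hB2
      · apply hB1
        refine Finset.mem_filter.mpr ⟨h1, ?_⟩
        rw [hflip, (Finset.mem_filter.mp hA2).2]
      · apply hA1
        refine Finset.mem_filter.mpr ⟨h1, ?_⟩
        rw [hflip, (Finset.mem_filter.mp hB2).2,
          Finset.sdiff_sdiff_eq_self (patC_subset _ _)]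
    set F1 := K.filter (fun J => (dl J ∈ A ∧ dr J ∈ B) ∨ (dl J ∈ B ∧ dr J ∈ A)) with hF1
    set F2 := K.filter (fun J => dl J ∈ R' ∧ dr J ∈ R') with hF2
    have hsub : K.filter (fun J => dl J ∈ R ∧ dr J ∈ R) ⊆ F1 ∪ F2 := by
      intro J hJ
      rw [Finset.mem_filter] at hJ
      rcases hsplit J hJ.1 hJ.2.1 hJ.2.2 with h | h
      · exact Finset.mem_union.mpr (Or.inl (Finset.mem_filter.mpr ⟨hJ.1, h⟩))
      · exact Finset.mem_union.mpr (Or.inr (Finset.mem_filter.mpr ⟨hJ.1, h⟩))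
    have hcard1 : F1.card ≤ A.card * B.card := by
      apply KXcard hABempty
      · intro J hJ
        rw [hF1, Finset.mem_filter] at hJ
        exact ⟨(hK J hJ.1).1, hJ.2⟩
      · intro J hJ J' hJ' hd1 hd2
        rw [hF1, Finset.mem_filter] at hJ hJ'
        exact hinj J hJ.1 J' hJ'.1 hd1 hd2
    have hABsubR : A ∪ B ⊆ R := by
      rw [hA, hB]
      exact Finset.union_subset (Finset.filter_subset _ _) (Finset.filter_subset _ _)
    have hcardAB : (A ∪ B).card = A.card + B.card := by
      rw [Finset.card_union_of_disjoint (Finset.disjoint_iff_inter_eq_empty.mpr hABempty)]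
    have hcardsum : R'.card + (A ∪ B).card = R.card := by
      rw [hR'def]
      exact Finset.card_sdiff_add_card_eq_card hABsubR
    have hABpos : 1 ≤ (A ∪ B).card := by
      have : dl J0 ∈ A ∪ B := Finset.mem_union_left _ hxA
      exact Finset.card_pos.mpr ⟨_, this⟩
    have hIH := ih R' (by omega)
    have hF2card : 4 * F2.card ≤ R'.card * R'.card := hIH
    calc 4 * (K.filter (fun J => dl J ∈ R ∧ dr J ∈ R)).card
        ≤ 4 * (F1 ∪ F2).card := by
          apply Nat.mul_le_mul_left
          exact Finset.card_le_card hsub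
      _ ≤ 4 * (F1.card + F2.card) := by
          apply Nat.mul_le_mul_left
          exact Finset.card_union_le _ _
      _ = 4 * F1.card + 4 * F2.card := by ring
      _ ≤ 4 * (A.card * B.card) + R'.card * R'.card := by
          have := hF2card
          omega
      _ ≤ R.card * R.card := by
          have h2 : 2 * (A.card * B.card) ≤ A.card * A.card + B.card * B.card :=
            two_mul_le_sq_add_sq _ _
          have hsum : A.card + B.card + R'.card = R.card := by omega
          nlinarith


set_option maxHeartbeats 2000000 in
lemma mid_exists {n : ℕ} {C : Finset (Finset ℕ)} (hCne : C.Nonempty)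
    (hCval : ∀ f ∈ C, IsInterval n f)
    {u0 w0 x3 y3 : ℕ}
    (hw0 : w0 ≤ n + 2) (hx3 : x3 ≤ n + 2) (hy3 : y3 ≤ n + 2)
    (hu0e : ∀ f ∈ C, dl f ≠ u0 ∧ dr f ≠ u0)
    (hw0e : ∀ f ∈ C, dl f ≠ w0 ∧ dr f ≠ w0)
    (hx3e : ∀ f ∈ C, dl f ≠ x3 ∧ dr f ≠ x3)
    (hy3e : ∀ f ∈ C, dl f ≠ y3 ∧ dr f ≠ y3)
    (hw0p : patC C w0 = C \ patC C u0)
    (hcase : (patC C x3 = patC C u0 ∧ patC C y3 = C \ patC C u0) ∨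
             (patC C x3 = C \ patC C u0 ∧ patC C y3 = patC C u0))
    (hcr : Cross u0 w0 x3 y3) :
    ∃ M, IsInterval n M ∧ (∀ f ∈ C, iRel n f M) ∧
      ¬ Cross u0 w0 (dl M) (dr M) ∧ ¬ Cross (dl M) (dr M) x3 y3 ∧
      ¬ (dl M = u0 ∧ dr M = w0) ∧ ¬ (dl M = x3 ∧ dr M = y3) := by
  unfold Cross at hcr
  have hdist : x3 ≠ u0 ∧ x3 ≠ w0 ∧ y3 ≠ u0 ∧ y3 ≠ w0 ∧ x3 < y3 := by
    omega
  obtain ⟨z, hz3, hzpat, hze, hzn⟩ :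
      ∃ z, (z = x3 ∨ z = y3) ∧ patC C z = patC C u0 ∧
        (∀ f ∈ C, dl f ≠ z ∧ dr f ≠ z) ∧ z ≤ n + 2 := by
    rcases hcase with ⟨h1, _⟩ | ⟨_, h2⟩
    · exact ⟨x3, Or.inl rfl, h1, hx3e, hx3⟩
    · exact ⟨y3, Or.inr rfl, h2, hy3e, hy3⟩
  have hzw0 : z ≠ w0 := by
    intro h
    have h2 : patC C z = C \ patC C u0 := by rw [h, hw0p]
    exact compl_ne hCne (patC_subset C u0) (hzpat.symm.trans h2)
  have hopp : ∀ f ∈ C, dl f ≠ z ∧ dr f ≠ z ∧ dl f ≠ w0 ∧ dr f ≠ w0 ∧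
      ((dl f < z ∧ z < dr f) ↔ ¬(dl f < w0 ∧ w0 < dr f)) := by
    intro f hf
    have hz1 := hze f hf
    have hw1 := hw0e f hf
    have e2 : f ∈ patC C w0 ↔ (f ∈ C ∧ f ∉ patC C u0) := by
      rw [hw0p, Finset.mem_sdiff]
    have ez : (dl f < z ∧ z < dr f) ↔ (dl f < u0 ∧ u0 < dr f) := by
      constructor
      · intro h
        have hm : f ∈ patC C u0 := hzpat ▸ mem_patC.mpr ⟨hf, h⟩
        exact (mem_patC.mp hm).2
      · intro h
        have hm : f ∈ patC C z := hzpat.symm ▸ mem_patC.mpr ⟨hf, h⟩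
        exact (mem_patC.mp hm).2
    have ew : (dl f < w0 ∧ w0 < dr f) ↔ ¬(dl f < u0 ∧ u0 < dr f) := by
      constructor
      · intro h hu
        exact (e2.mp (mem_patC.mpr ⟨hf, h⟩)).2 (mem_patC.mpr ⟨hf, hu⟩)
      · intro h
        have hm := e2.mpr ⟨hf, fun hmem => h (mem_patC.mp hmem).2⟩
        exact (mem_patC.mp hm).2
    refine ⟨hz1.1, hz1.2, hw1.1, hw1.2, ?_⟩
    rw [ez, ew]
    exact not_not.symm
  set s := min z w0 with hsdef
  set t := max z w0 with htdef
  have hst : s + 2 ≤ t ∧ t ≤ n + 2 := by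
    obtain ⟨f0, hf0⟩ := hCne
    obtain ⟨a1, a2, a3, a4, hiff⟩ := hopp f0 hf0
    have hflt : dl f0 + 2 ≤ dr f0 := (interval_eq_dia (hCval f0 hf0)).2.1
    omega
  refine ⟨Finset.Icc (s+1) (t-1), ⟨s+1, t-1, by omega, by omega, by omega, rfl⟩, ?_, ?_, ?_, ?_, ?_⟩
  all_goals
    have hlo : lo (Finset.Icc (s+1) (t-1)) = s + 1 := lo_Icc (by omega)
    have hhi : hi (Finset.Icc (s+1) (t-1)) = t - 1 := hi_Icc (by omega)
    have hdlM : dl (Finset.Icc (s+1) (t-1)) = s := by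
      show lo (Finset.Icc (s+1) (t-1)) - 1 = s
      rw [hlo, Nat.add_sub_cancel]
    have hdrM : dr (Finset.Icc (s+1) (t-1)) = t := by
      show hi (Finset.Icc (s+1) (t-1)) + 1 = t
      rw [hhi]
      omega
  · intro f hf
    rw [iRel_iff_cross (hCval f hf) ⟨s+1, t-1, by omega, by omega, by omega, rfl⟩]
    show Cross (dl f) (dr f) (lo (Finset.Icc (s+1) (t-1)) - 1) (hi (Finset.Icc (s+1) (t-1)) + 1)
    have e1 : lo (Finset.Icc (s+1) (t-1)) - 1 = s := hdlM
    have e2 : hi (Finset.Icc (s+1) (t-1)) + 1 = t := hdrM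
    rw [e1, e2]
    obtain ⟨b1, b2, b3, b4, hiff⟩ := hopp f hf
    have hflt : dl f + 2 ≤ dr f := (interval_eq_dia (hCval f hf)).2.1
    unfold Cross
    omega
  · rw [hdlM, hdrM]
    unfold Cross
    omega
  · rw [hdlM, hdrM]
    unfold Cross
    omega
  · rw [hdlM, hdrM]
    omega
  · rw [hdlM, hdrM]
    omega

end Stmt11Aux


set_option maxHeartbeats 3200000 in
open Stmt11Aux in
theorem stmt11 {n : ℕ} (S : Finset (Finset ℕ))
    (hS : ∀ I ∈ S, IsInterval n I ∧ I ≠ Finset.Icc 1 (n + 1))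
    (hcard : iMax n < S.card) :
    Nat.card
      (SimpleGraph.fromRel
        fun I J : {I // I ∈ S} => facetMeets n I.1 J.1).ConnectedComponent ≤ 2 := by
  set G := (SimpleGraph.fromRel fun I J : {I // I ∈ S} => facetMeets n I.1 J.1) with hGdef
  by_contra hcon
  push_neg at hcon
  have : Fintype G.ConnectedComponent := Fintype.ofFinite _
  rw [Nat.card_eq_fintype_card] at hcon
  obtain ⟨c1, c2, c3, h12, h13, h23⟩ := Fintype.two_lt_card_iff.mp hcon
  obtain ⟨v1, hv1⟩ := c1.exists_rep
  obtain ⟨v2, hv2⟩ := c2.exists_rep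
  obtain ⟨v3, hv3⟩ := c3.exists_rep
  have hSval : ∀ J ∈ S, IsInterval n J := fun J h => (hS J h).1
  have hinjS : ∀ J, IsInterval n J → ∀ J', IsInterval n J' →
      dl J = dl J' → dr J = dr J' → J = J' := by
    intro J hJ J' hJ' h1 h2
    rw [(interval_eq_dia hJ).1, (interval_eq_dia hJ').1, h1, h2]
  -- the component of v1, as a finset
  set C : Finset (Finset ℕ) :=
    S.filter (fun J => ∀ h : J ∈ S, G.connectedComponentMk ⟨J, h⟩ = c1) with hCdef
  have hCsub : C ⊆ S := Finset.filter_subset _ _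
  have hmemC : ∀ (J) (hJ : J ∈ S), (J ∈ C ↔ G.connectedComponentMk ⟨J, hJ⟩ = c1) := by
    intro J hJ
    rw [hCdef, Finset.mem_filter]
    constructor
    · rintro ⟨_, h⟩; exact h hJ
    · intro h; exact ⟨hJ, fun h' => h⟩
  have hI1C : (v1 : Finset ℕ) ∈ C := by
    rw [hmemC _ v1.2]
    exact hv1
  have hCne : C.Nonempty := ⟨_, hI1C⟩
  -- elements of S outside C are iRel to everything in C
  have hcross : ∀ (J) (hJ : J ∈ S), J ∉ C → ∀ f ∈ C, iRel n f J := by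
    intro J hJ hJC f hfC
    have hfS : f ∈ S := hCsub hfC
    have hne : (⟨f, hfS⟩ : {I // I ∈ S}) ≠ ⟨J, hJ⟩ := by
      intro h
      apply hJC
      rw [hmemC _ hJ, ← h]
      exact (hmemC _ hfS).mp hfC
    have hnadj : ¬ G.Adj ⟨f, hfS⟩ ⟨J, hJ⟩ := by
      intro hadj
      apply hJC
      rw [hmemC _ hJ, ← SimpleGraph.ConnectedComponent.eq.mpr hadj.reachable]
      exact (hmemC _ hfS).mp hfC
    rw [hGdef, SimpleGraph.fromRel_adj] at hnadj
    push_neg at hnadj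
    have := (hnadj hne).1
    rw [facetMeets_iff_not_iRel, not_not] at this
    exact this
  -- cross in diagonal coordinates
  have hcrossd : ∀ (J) (_ : IsInterval n J) (f) (_ : f ∈ C), iRel n f J →
      Cross (dl f) (dr f) (dl J) (dr J) := by
    intro J hJint f hfC hrel
    have hfint := hSval f (hCsub hfC)
    rw [iRel_iff_cross hfint hJint] at hrel
    exact hrel
  -- K : all intervals crossing everything in C
  set K : Finset (Finset ℕ) :=
    (Finset.Icc 1 (n+1)).powerset.filter (fun J => IsInterval n J ∧ ∀ f ∈ C, iRel n f J)
    with hKdef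
  have hmemK : ∀ J, J ∈ K ↔ (IsInterval n J ∧ ∀ f ∈ C, iRel n f J) := by
    intro J
    rw [hKdef, Finset.mem_filter]
    constructor
    · rintro ⟨_, h⟩; exact h
    · intro h; exact ⟨interval_mem_powerset h.1, h⟩
  have hSCK : ∀ J ∈ S, J ∉ C → J ∈ K := by
    intro J hJ hJC
    rw [hmemK]
    exact ⟨hSval J hJ, hcross J hJ hJC⟩
  -- basic facts about elements of K
  have hKcross : ∀ J ∈ K, ∀ f ∈ C, Cross (dl f) (dr f) (dl J) (dr J) := by
    intro J hJ f hf
    rw [hmemK] at hJ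
    exact hcrossd J hJ.1 f hf (hJ.2 f hf)
  -- vertices
  set V0 : Finset ℕ := Finset.Icc 0 (n+2) with hV0def
  set P : Finset ℕ := V0.filter (fun w => ∀ f ∈ C, dl f ≠ w ∧ dr f ≠ w) with hPdef
  have hKpat : ∀ J ∈ K, dl J < dr J ∧ dl J ∈ P ∧ dr J ∈ P ∧
      patC C (dr J) = C \ patC C (dl J) := by
    intro J hJ
    have hJint : IsInterval n J := ((hmemK J).mp hJ).1
    obtain ⟨hJeq, hJlt, hJle⟩ := interval_eq_dia hJint
    have hcr := hKcross J hJ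
    have hend : ∀ f ∈ C, dl f ≠ dl J ∧ dr f ≠ dl J ∧ dl f ≠ dr J ∧ dr f ≠ dr J := by
      intro f hf
      have := hcr f hf
      unfold Cross at this
      omega
    refine ⟨by omega, ?_, ?_, ?_⟩
    · rw [hPdef, Finset.mem_filter]
      refine ⟨by rw [hV0def, Finset.mem_Icc]; omega, fun f hf => ⟨(hend f hf).1, (hend f hf).2.1⟩⟩
    · rw [hPdef, Finset.mem_filter]
      refine ⟨by rw [hV0def, Finset.mem_Icc]; omega, fun f hf => ⟨(hend f hf).2.2.1, (hend f hf).2.2.2⟩⟩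
    · ext f
      rw [mem_patC, Finset.mem_sdiff, mem_patC]
      constructor
      · rintro ⟨hfC, hin⟩
        refine ⟨hfC, fun hmem => ?_⟩
        obtain ⟨_, hmem2⟩ := hmem
        have hcr2 := hcr f hfC
        unfold Cross at hcr2
        omega
      · rintro ⟨hfC, hnot⟩
        refine ⟨hfC, ?_⟩
        have hn2 : ¬ (dl f < dl J ∧ dl J < dr f) := fun hh => hnot ⟨hfC, hh⟩
        have hcr2 := hcr f hfC
        unfold Cross at hcr2
        omega
  -- I2 and I3
  have hI2nC : (v2 : Finset ℕ) ∉ C := by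
    intro h
    rw [hmemC _ v2.2] at h
    have h' : G.connectedComponentMk v2 = c1 := h
    exact h12 (h'.symm.trans hv2)
  have hI3nC : (v3 : Finset ℕ) ∉ C := by
    intro h
    rw [hmemC _ v3.2] at h
    have h' : G.connectedComponentMk v3 = c1 := h
    exact h13 (h'.symm.trans hv3)
  have hI2K : (v2 : Finset ℕ) ∈ K := hSCK _ v2.2 hI2nC
  have hI3K : (v3 : Finset ℕ) ∈ K := hSCK _ v3.2 hI3nC
  set u0 := dl (v2 : Finset ℕ) with hu0def
  set w0 := dr (v2 : Finset ℕ) with hw0def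
  obtain ⟨hu0w0, hu0P, hw0P, hw0pat⟩ := hKpat _ hI2K
  -- the classes
  set A : Finset ℕ := P.filter (fun w => patC C w = patC C u0) with hAdef
  set B : Finset ℕ := P.filter (fun w => patC C w = C \ patC C u0) with hBdef
  set R : Finset ℕ := P \ (A ∪ B) with hRdef
  have hABempty : A ∩ B = ∅ := by
    rw [Finset.eq_empty_iff_forall_notMem]
    intro w hw
    rw [Finset.mem_inter] at hw
    have h1 := (Finset.mem_filter.mp hw.1).2
    have h2 := (Finset.mem_filter.mp hw.2).2
    exact compl_ne hCne (patC_subset C u0) (h1 ▸ h2)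
  have hu0A : u0 ∈ A := Finset.mem_filter.mpr ⟨hu0P, rfl⟩
  have hw0B : w0 ∈ B := Finset.mem_filter.mpr ⟨hw0P, hw0pat⟩
  -- endpoint sets
  set Ept : Finset ℕ := V0.filter (fun w => ∃ f ∈ C, dl f = w ∨ dr f = w) with hEptdef
  set E1 : Finset ℕ := Ept.filter (fun w => u0 < w ∧ w < w0) with hE1def
  set E2 : Finset ℕ := Ept.filter (fun w => w < u0 ∨ w0 < w) with hE2def
  have hE12 : E1 ∩ E2 = ∅ := by
    rw [Finset.eq_empty_iff_forall_notMem]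
    intro w hw
    rw [Finset.mem_inter] at hw
    have h1 := (Finset.mem_filter.mp hw.1).2
    have h2 := (Finset.mem_filter.mp hw.2).2
    omega
  -- C endpoints land in E1/E2
  have hCend : ∀ f ∈ C, dl f < dr f ∧
      ((dl f ∈ E1 ∧ dr f ∈ E2) ∨ (dl f ∈ E2 ∧ dr f ∈ E1)) := by
    intro f hf
    have hfint := hSval f (hCsub hf)
    obtain ⟨hfeq, hflt, hfle⟩ := interval_eq_dia hfint
    have hcr := hKcross _ hI2K f hf
    have hdlV : dl f ∈ Ept := by
      rw [hEptdef, Finset.mem_filter]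
      exact ⟨by rw [hV0def, Finset.mem_Icc]; omega, ⟨f, hf, Or.inl rfl⟩⟩
    have hdrV : dr f ∈ Ept := by
      rw [hEptdef, Finset.mem_filter]
      exact ⟨by rw [hV0def, Finset.mem_Icc]; omega, ⟨f, hf, Or.inr rfl⟩⟩
    unfold Cross at hcr
    rcases hcr with ⟨h1, h2, h3⟩ | ⟨h1, h2, h3⟩
    · refine ⟨by omega, Or.inr ⟨?_, ?_⟩⟩
      · rw [hE2def, Finset.mem_filter]; exact ⟨hdlV, by omega⟩
      · rw [hE1def, Finset.mem_filter]; exact ⟨hdrV, by omega⟩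
    · refine ⟨by omega, Or.inl ⟨?_, ?_⟩⟩
      · rw [hE1def, Finset.mem_filter]; exact ⟨hdlV, by omega⟩
      · rw [hE2def, Finset.mem_filter]; exact ⟨hdrV, by omega⟩
  have hCcard : C.card ≤ E1.card * E2.card := by
    apply KXcard hE12
    · intro f hf
      obtain ⟨h1, h2⟩ := hCend f hf
      exact ⟨h1, h2⟩
    · intro f hf f' hf' h1 h2
      exact hinjS f (hSval f (hCsub hf)) f' (hSval f' (hCsub hf')) h1 h2
  -- split K
  have hKsplit : ∀ J ∈ K, ((dl J ∈ A ∧ dr J ∈ B) ∨ (dl J ∈ B ∧ dr J ∈ A)) ∨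
      (dl J ∈ R ∧ dr J ∈ R) := by
    intro J hJ
    obtain ⟨hlt, hdlP, hdrP, hpat⟩ := hKpat J hJ
    have hflip : patC C (dl J) = C \ patC C (dr J) := by
      rw [hpat, Finset.sdiff_sdiff_eq_self (patC_subset _ _)]
    by_cases hA1 : dl J ∈ A
    · left; left
      refine ⟨hA1, Finset.mem_filter.mpr ⟨hdrP, ?_⟩⟩
      rw [hpat, (Finset.mem_filter.mp hA1).2]
    by_cases hB1 : dl J ∈ B
    · left; right
      refine ⟨hB1, Finset.mem_filter.mpr ⟨hdrP, ?_⟩⟩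
      rw [hpat, (Finset.mem_filter.mp hB1).2, Finset.sdiff_sdiff_eq_self (patC_subset _ _)]
    right
    have hdl : dl J ∈ R := Finset.mem_sdiff.mpr ⟨hdlP, by rw [Finset.mem_union]; tauto⟩
    refine ⟨hdl, Finset.mem_sdiff.mpr ⟨hdrP, ?_⟩⟩
    intro hmem
    rw [Finset.mem_union] at hmem
    rcases hmem with hA2 | hB2
    · apply hB1
      refine Finset.mem_filter.mpr ⟨hdlP, ?_⟩
      rw [hflip, (Finset.mem_filter.mp hA2).2]
    · apply hA1
      refine Finset.mem_filter.mpr ⟨hdlP, ?_⟩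
      rw [hflip, (Finset.mem_filter.mp hB2).2, Finset.sdiff_sdiff_eq_self (patC_subset _ _)]
  set KAB := K.filter (fun J => (dl J ∈ A ∧ dr J ∈ B) ∨ (dl J ∈ B ∧ dr J ∈ A)) with hKABdef
  set KR := K.filter (fun J => dl J ∈ R ∧ dr J ∈ R) with hKRdef
  have hKsub : K ⊆ KAB ∪ KR := by
    intro J hJ
    rcases hKsplit J hJ with h | h
    · exact Finset.mem_union.mpr (Or.inl (Finset.mem_filter.mpr ⟨hJ, h⟩))
    · exact Finset.mem_union.mpr (Or.inr (Finset.mem_filter.mpr ⟨hJ, h⟩))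
  have hKinj : ∀ J ∈ K, ∀ J' ∈ K, dl J = dl J' → dr J = dr J' → J = J' := by
    intro J hJ J' hJ' h1 h2
    exact hinjS J ((hmemK J).mp hJ).1 J' ((hmemK J').mp hJ').1 h1 h2
  have hKABcard : KAB.card ≤ A.card * B.card := by
    apply KXcard hABempty
    · intro J hJ
      rw [hKABdef, Finset.mem_filter] at hJ
      exact ⟨(hKpat J hJ.1).1, hJ.2⟩
    · intro J hJ J' hJ' h1 h2
      rw [hKABdef, Finset.mem_filter] at hJ hJ'
      exact hKinj J hJ.1 J' hJ'.1 h1 h2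
  have hQbound : 4 * KR.card ≤ R.card * R.card := by
    rw [hKRdef]
    exact opp_ind C hCne K (fun J hJ => ⟨(hKpat J hJ).1, (hKpat J hJ).2.2.2⟩) hKinj
      R.card R (le_refl _)
  -- cardinal bookkeeping
  have hPE : P ∩ Ept = ∅ := by
    rw [Finset.eq_empty_iff_forall_notMem]
    intro w hw
    rw [Finset.mem_inter, hPdef, hEptdef, Finset.mem_filter, Finset.mem_filter] at hw
    obtain ⟨⟨_, h1⟩, _, f, hf, h2⟩ := hw
    have := h1 f hf
    tauto
  have hABP : A ∪ B ⊆ P := Finset.union_subset (Finset.filter_subset _ _) (Finset.filter_subset _ _)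
  have hcardABR : A.card + B.card + R.card = P.card := by
    have h1 : (A ∪ B).card = A.card + B.card :=
      Finset.card_union_of_disjoint (Finset.disjoint_iff_inter_eq_empty.mpr hABempty)
    have h2 : R.card + (A ∪ B).card = P.card := by
      rw [hRdef]; exact Finset.card_sdiff_add_card_eq_card hABP
    omega
  have hcardE : E1.card + E2.card ≤ Ept.card := by
    have h1 : (E1 ∪ E2).card = E1.card + E2.card :=
      Finset.card_union_of_disjoint (Finset.disjoint_iff_inter_eq_empty.mpr hE12)
    have h2 : E1 ∪ E2 ⊆ Ept :=
      Finset.union_subset (Finset.filter_subset _ _) (Finset.filter_subset _ _)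
    calc E1.card + E2.card = (E1 ∪ E2).card := h1.symm
      _ ≤ Ept.card := Finset.card_le_card h2
  have hcardPE : P.card + Ept.card ≤ n + 3 := by
    have h1 : (P ∪ Ept).card = P.card + Ept.card :=
      Finset.card_union_of_disjoint (Finset.disjoint_iff_inter_eq_empty.mpr hPE)
    have h2 : P ∪ Ept ⊆ V0 :=
      Finset.union_subset (Finset.filter_subset _ _) (Finset.filter_subset _ _)
    have h3 : V0.card = n + 3 := by rw [hV0def, Nat.card_Icc]; omega
    calc P.card + Ept.card = (P ∪ Ept).card := h1.symm
      _ ≤ V0.card := Finset.card_le_card h2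
      _ = n + 3 := h3
  have htotal : A.card + B.card + R.card + E1.card + E2.card ≤ n + 3 := by omega
  -- nonemptiness
  have hApos : 1 ≤ A.card := Finset.card_pos.mpr ⟨u0, hu0A⟩
  have hBpos : 1 ≤ B.card := Finset.card_pos.mpr ⟨w0, hw0B⟩
  have hE1pos : 1 ≤ E1.card := by
    obtain ⟨_, h⟩ := hCend _ hI1C
    rcases h with ⟨h1, _⟩ | ⟨_, h2⟩
    · exact Finset.card_pos.mpr ⟨_, h1⟩
    · exact Finset.card_pos.mpr ⟨_, h2⟩
  have hE2pos : 1 ≤ E2.card := by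
    obtain ⟨_, h⟩ := hCend _ hI1C
    rcases h with ⟨_, h2⟩ | ⟨h1, _⟩
    · exact Finset.card_pos.mpr ⟨_, h2⟩
    · exact Finset.card_pos.mpr ⟨_, h1⟩
  -- global count
  have hSsplit : S.card = C.card + (S \ C).card := by
    have := Finset.card_sdiff_add_card_eq_card hCsub
    omega
  have hSCsub : S \ C ⊆ K := by
    intro J hJ
    rw [Finset.mem_sdiff] at hJ
    exact hSCK J hJ.1 hJ.2
  have hKcard : K.card ≤ KAB.card + KR.card :=
    le_trans (Finset.card_le_card hKsub) (Finset.card_union_le _ _)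
  have hScard : S.card ≤ E1.card * E2.card + (A.card * B.card + KR.card) := by
    calc S.card = C.card + (S \ C).card := hSsplit
      _ ≤ E1.card * E2.card + K.card := by
          have := Finset.card_le_card hSCsub
          omega
      _ ≤ E1.card * E2.card + (A.card * B.card + KR.card) := by omega
  -- case on KR
  by_cases hQ0 : KR.card = 0
  · -- tight case
    rw [hQ0] at hScard
    obtain ⟨u, hu1, hu2, hu3⟩ := arith1 hE1pos hE2pos hApos hBpos
      (show E1.card + E2.card + A.card + B.card ≤ n + 3 by omega)
    have hiMax : u * (n + 1 - u) ≤ iMax n := iMax_lb hu1 (by omega)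
    have hub : u * (n + 3 - 2 - u) = u * (n + 1 - u) := rfl
    rw [hub] at hu3
    -- S.card = iMax n + 1 and all inequalities tight
    have hSeq : S.card = iMax n + 1 := by omega
    have hKeq : (S \ C).card = K.card := by
      have h1 := Finset.card_le_card hSCsub
      omega
    have hSCeqK : S \ C = K := Finset.eq_of_subset_of_card_le hSCsub (le_of_eq hKeq.symm)
    -- geometric contradiction
    clear hScard hu3 hSeq hKeq hiMax hu1 hu2
    set x3 := dl (v3 : Finset ℕ) with hx3def
    set y3 := dr (v3 : Finset ℕ) with hy3def
    obtain ⟨h3lt, h3dlP, h3drP, h3pat⟩ := hKpat _ hI3K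
    have hKRempty : KR = ∅ := Finset.card_eq_zero.mp hQ0
    have hx3AB : (x3 ∈ A ∧ y3 ∈ B) ∨ (x3 ∈ B ∧ y3 ∈ A) := by
      rcases hKsplit _ hI3K with h | h
      · exact h
      · exfalso
        have hm : (v3 : Finset ℕ) ∈ KR := Finset.mem_filter.mpr ⟨hI3K, h⟩
        rw [hKRempty] at hm
        exact Finset.notMem_empty _ hm
    have hreach : ¬ G.Reachable v2 v3 := by
      intro h
      have h' := SimpleGraph.ConnectedComponent.eq.mpr h
      exact h23 ((hv2.symm.trans h').trans hv3)
    have hv2ne3 : v2 ≠ v3 := by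
      rintro rfl
      exact h23 (hv2.symm.trans hv3)
    have hboundP : ∀ w ∈ P, w ≤ n + 2 := by
      intro w hw
      have hm := (Finset.mem_filter.mp hw).1
      rw [hV0def, Finset.mem_Icc] at hm
      omega
    have hPe : ∀ w ∈ P, ∀ f ∈ C, dl f ≠ w ∧ dr f ≠ w :=
      fun w hw => (Finset.mem_filter.mp hw).2
    by_cases hcr : Cross u0 w0 x3 y3
    · -- crossing: go through a middle interval M
      have hcase : (patC C x3 = patC C u0 ∧ patC C y3 = C \ patC C u0) ∨
          (patC C x3 = C \ patC C u0 ∧ patC C y3 = patC C u0) := by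
        rcases hx3AB with ⟨h1, h2⟩ | ⟨h1, h2⟩
        · exact Or.inl ⟨(Finset.mem_filter.mp h1).2, (Finset.mem_filter.mp h2).2⟩
        · exact Or.inr ⟨(Finset.mem_filter.mp h1).2, (Finset.mem_filter.mp h2).2⟩
      obtain ⟨M, hMint, hMrel, hnc1, hnc2, hne1, hne2⟩ :=
        mid_exists hCne (fun f hf => hSval f (hCsub hf))
          (hboundP _ hw0P) (hboundP _ h3dlP) (hboundP _ h3drP)
          (hPe _ hu0P) (hPe _ hw0P) (hPe _ h3dlP) (hPe _ h3drP)
          hw0pat hcase hcr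
      have hMK : M ∈ K := (hmemK M).mpr ⟨hMint, hMrel⟩
      have hMSC : M ∈ S \ C := by rw [hSCeqK]; exact hMK
      have hMS : M ∈ S := (Finset.mem_sdiff.mp hMSC).1
      have hadj2 : G.Adj v2 ⟨M, hMS⟩ := by
        rw [hGdef, SimpleGraph.fromRel_adj]
        constructor
        · intro h
          have h' : (v2 : Finset ℕ) = M := congrArg Subtype.val h
          exact hne1 ⟨(congrArg dl h').symm, (congrArg dr h').symm⟩
        refine Or.inl ?_
        rw [facetMeets_iff_not_iRel]
        intro hrel
        rw [iRel_iff_cross (hSval _ v2.2) hMint] at hrel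
        exact hnc1 hrel
      have hadj3 : G.Adj (⟨M, hMS⟩ : {I // I ∈ S}) v3 := by
        rw [hGdef, SimpleGraph.fromRel_adj]
        constructor
        · intro h
          have h' : M = (v3 : Finset ℕ) := congrArg Subtype.val h
          exact hne2 ⟨congrArg dl h', congrArg dr h'⟩
        refine Or.inl ?_
        rw [facetMeets_iff_not_iRel]
        intro hrel
        rw [iRel_iff_cross hMint (hSval _ v3.2)] at hrel
        exact hnc2 hrel
      exact hreach (hadj2.reachable.trans hadj3.reachable)
    · -- non-crossing: direct adjacency
      have hmeet : facetMeets n (v2 : Finset ℕ) (v3 : Finset ℕ) := by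
        rw [facetMeets_iff_not_iRel]
        intro hrel
        rw [iRel_iff_cross (hSval _ v2.2) (hSval _ v3.2)] at hrel
        exact hcr hrel
      have hadj : G.Adj v2 v3 := by
        rw [hGdef, SimpleGraph.fromRel_adj]
        exact ⟨hv2ne3, Or.inl hmeet⟩
      exact hreach hadj.reachable
  · -- KR nonempty: strictly below iMax
    have hQpos : 1 ≤ KR.card := by omega
    obtain ⟨u, hu1, hu2, hu3⟩ := arith2 hE1pos hE2pos hApos hBpos hQpos hQbound
      (show E1.card + E2.card + A.card + B.card + R.card ≤ n + 3 by omega)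
    have hiMax : u * (n + 1 - u) ≤ iMax n := iMax_lb hu1 (by omega)
    have hub : u * (n + 3 - 2 - u) = u * (n + 1 - u) := rfl
    rw [hub] at hu3
    omega
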